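/- arXiv:1404.0997 — 3 statements merged into one kernel-verified Lean document; each statement's English description precedes it below -/
import Mathlib

section
/- Let r ≥ 1 and let (s_1, …, s_r) be positive integers with s_1 ≥ 2. Then the Hurwitz multizeta function He^{s_1,…,s_r} : z ↦ Σ_{0 < n_r < ⋯ < n_1} 1/((n_1+z)^{s_1} ⋯ (n_r+z)^{s_r}) is holomorphic (complex differentiable) on the open set Ω = ℂ ∖ {-1, -2, -3, …}. -/
/-- Membership in the domain `Ω = ℂ ∖ {-1, -2, -3, …}`. -/
def InOmega (z : ℂ) : Prop := ∀ k : ℕ, z ≠ -((k : ℂ) + 1)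

/-- The Hurwitz multizeta function `He^{s₁,…,s_r}(z) = ∑_{0 < n_r < ⋯ < n₁} ∏ 1/(n_i+z)^{s_i}`,
indexed by strictly decreasing tuples of positive integers. For `s = []` this is the
constant function `1`. -/
noncomputable def He (s : List ℕ) (z : ℂ) : ℂ :=
  ∑' n : {n : Fin s.length → ℕ // StrictAnti n ∧ ∀ i, 0 < n i},
    ∏ i, 1 / (((n.1 i : ℂ) + z) ^ s.get i)

/-- A composition `s = (s₁, …, s_r)` is admissible if all parts are positive and
the first part (if any) is at least 2. -/
def Admissible (s : List ℕ) : Prop :=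
  (∀ k ∈ s, 1 ≤ k) ∧ ∀ k ∈ s.head?, 2 ≤ k

/-- Summability of products over tuples. -/
lemma He_summable_pi_prod {f : ℕ → ℝ} (hf : Summable f) (h0 : ∀ n, 0 ≤ f n) :
    ∀ r : ℕ, Summable (fun m : Fin r → ℕ => ∏ i, f (m i)) := by
  intro r
  induction r with
  | zero =>
    simpa using (summable_of_finite_support (Set.toFinite _) :
      Summable (fun _ : Fin 0 → ℕ => (1:ℝ)))
  | succ r ih =>
    rw [← Equiv.summable_iff (Fin.consEquiv fun _ : Fin (r+1) => ℕ)]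
    have h : ((fun m : Fin (r+1) → ℕ => ∏ i, f (m i)) ∘ (Fin.consEquiv fun _ : Fin (r+1) => ℕ))
        = fun p : ℕ × (Fin r → ℕ) => f p.1 * ∏ i, f (p.2 i) := by
      funext p
      simp [Fin.prod_univ_succ]
    rw [h]
    have h0' : 0 ≤ f := h0
    have hg' : 0 ≤ (fun m : Fin r → ℕ => ∏ i, f (m i)) :=
      fun m => Finset.prod_nonneg fun i _ => h0 _
    have key := hf.mul_of_nonneg ih h0' hg'
    exact key

/-- The key elementary inequality: for a strictly decreasing positive tuple and exponents
`e i ≥ 1` with `e 0 ≥ 2`, we have `(∏ nᵢ)^(1+1/r) ≤ ∏ nᵢ^(eᵢ)`. -/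
lemma He_key_ineq {r : ℕ} (hr0 : 0 < r) (e : Fin r → ℕ) (he1 : ∀ i, 1 ≤ e i)
    (he0 : 2 ≤ e ⟨0, hr0⟩) (n : Fin r → ℕ) (hanti : StrictAnti n) (hpos : ∀ i, 0 < n i) :
    (∏ i, ((n i : ℝ))) ^ ((1:ℝ) + 1/(r:ℝ)) ≤ ∏ i, ((n i : ℝ)) ^ (e i) := by
  set i0 : Fin r := ⟨0, hr0⟩ with hi0
  have h1 : ∀ i, (1:ℝ) ≤ (n i : ℝ) := fun i => by exact_mod_cast hpos i
  have h0 : ∀ i, (0:ℝ) < (n i : ℝ) := fun i => lt_of_lt_of_le one_pos (h1 i)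
  set P : ℝ := ∏ i, ((n i : ℝ)) with hP
  have hP0 : 0 < P := Finset.prod_pos (fun i _ => h0 i)
  have hle : ∀ i, (n i : ℝ) ≤ (n i0 : ℝ) := by
    intro i
    exact_mod_cast hanti.antitone (show i0 ≤ i by simp [hi0, Fin.le_def])
  have hPn0 : P ≤ (n i0 : ℝ) ^ r := by
    calc P ≤ ∏ _i : Fin r, (n i0 : ℝ) :=
          Finset.prod_le_prod (fun i _ => (h0 i).le) (fun i _ => hle i)
    _ = (n i0 : ℝ) ^ r := by simp
  have hrne : ((r:ℝ)) ≠ 0 := Nat.cast_ne_zero.mpr hr0.ne'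
  have hroot : P ^ ((1:ℝ)/r) ≤ (n i0 : ℝ) := by
    have h := Real.rpow_le_rpow hP0.le hPn0 (by positivity : (0:ℝ) ≤ 1/r)
    rw [← Real.rpow_natCast ((n i0 : ℝ)) r, ← Real.rpow_mul (h0 i0).le] at h
    have hr1 : (r:ℝ) * (1/r) = 1 := by field_simp
    rwa [hr1, Real.rpow_one] at h
  have hmain : P * (n i0 : ℝ) ≤ ∏ i, ((n i : ℝ)) ^ (e i) := by
    have expand : ∏ i, ((n i : ℝ)) ^ (e i)
        = (n i0 : ℝ) ^ (e i0) * ∏ i ∈ Finset.univ.erase i0, ((n i : ℝ)) ^ (e i) :=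
      (Finset.mul_prod_erase _ _ (Finset.mem_univ i0)).symm
    have expandP : P = (n i0 : ℝ) * ∏ i ∈ Finset.univ.erase i0, (n i : ℝ) :=
      (Finset.mul_prod_erase _ _ (Finset.mem_univ i0)).symm
    have t1 : (n i0 : ℝ) * (n i0 : ℝ) ≤ (n i0 : ℝ) ^ (e i0) := by
      calc (n i0 : ℝ) * (n i0 : ℝ) = (n i0 : ℝ) ^ 2 := (sq _).symm
      _ ≤ (n i0 : ℝ) ^ (e i0) := pow_le_pow_right₀ (h1 i0) he0
    have t2 : ∏ i ∈ Finset.univ.erase i0, (n i : ℝ)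
        ≤ ∏ i ∈ Finset.univ.erase i0, ((n i : ℝ)) ^ (e i) :=
      Finset.prod_le_prod (fun i _ => (h0 i).le)
        (fun i _ => le_self_pow₀ (h1 i) (by have := he1 i; omega))
    rw [expand, expandP]
    calc ((n i0 : ℝ) * ∏ i ∈ Finset.univ.erase i0, (n i : ℝ)) * (n i0 : ℝ)
        = ((n i0 : ℝ) * (n i0 : ℝ)) * ∏ i ∈ Finset.univ.erase i0, (n i : ℝ) := by ring
    _ ≤ (n i0 : ℝ) ^ (e i0) * ∏ i ∈ Finset.univ.erase i0, ((n i : ℝ)) ^ (e i) :=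
      mul_le_mul t1 t2 (Finset.prod_nonneg fun i _ => (h0 i).le) (by positivity)
  calc P ^ ((1:ℝ) + 1/(r:ℝ)) = P ^ (1:ℝ) * P ^ ((1:ℝ)/r) := Real.rpow_add hP0 _ _
  _ = P * P ^ ((1:ℝ)/r) := by rw [Real.rpow_one]
  _ ≤ P * (n i0 : ℝ) := mul_le_mul_of_nonneg_left hroot hP0.le
  _ ≤ ∏ i, ((n i : ℝ)) ^ (e i) := hmain

/-- For an admissible composition `s`, the Hurwitz multizeta function
`He s` is holomorphic on `Ω = ℂ ∖ {-1,-2,…}`. -/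
theorem hurwitzMultizeta_differentiableOn (s : List ℕ) (hr : s ≠ [])
    (h1 : ∀ k ∈ s, 1 ≤ k) (h2 : 2 ≤ s.head hr) :
    DifferentiableOn ℂ (fun z => He s z) {z : ℂ | InOmega z} := by
  classical
  have hr0 : 0 < s.length := List.length_pos_iff.mpr hr
  set r := s.length with hrlen
  set e : Fin r → ℕ := fun i => s.get i with he
  have he1 : ∀ i, 1 ≤ e i := fun i => h1 _ (s.get_mem _)
  have he0 : 2 ≤ e ⟨0, hr0⟩ := by
    cases s with
    | nil => exact absurd rfl hr
    | cons a t => exact h2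
  intro z₀ hz₀
  have hz₀' : InOmega z₀ := hz₀
  -- nonvanishing at z₀
  have hz : ∀ n : ℕ, 1 ≤ n → ((n:ℂ) + z₀) ≠ 0 := by
    intro n hn h
    apply hz₀' (n - 1)
    have hcast : ((n - 1 : ℕ) : ℂ) + 1 = (n : ℂ) := by
      have : ((n - 1 : ℕ) : ℂ) = (n : ℂ) - 1 := by
        push_cast [Nat.cast_sub hn]; ring
      rw [this]; ring
    rw [hcast]
    linear_combination h
  -- constants
  set R : ℝ := ‖z₀‖ + 1 with hR
  have hR1 : 1 ≤ R := by
    have := norm_nonneg z₀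
    simp only [hR]; linarith
  set N : ℕ := max 1 ⌈2*R⌉₊ with hN
  have hN1 : 1 ≤ N := le_max_left _ _
  have hNR : 2*R ≤ (N:ℝ) := le_trans (Nat.le_ceil _) (by exact_mod_cast le_max_right _ _)
  have hIcc : (Finset.Icc 1 N).Nonempty := ⟨1, Finset.mem_Icc.mpr ⟨le_refl _, hN1⟩⟩
  set δ : ℝ := (Finset.Icc 1 N).inf' hIcc (fun n => ‖(n:ℂ) + z₀‖) with hδdef
  have hδ0 : 0 < δ := by
    rw [hδdef, Finset.lt_inf'_iff]
    intro b hb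
    have hb1 : 1 ≤ b := (Finset.mem_Icc.mp hb).1
    exact norm_pos_iff.mpr (hz b hb1)
  have hδle : ∀ n ∈ Finset.Icc 1 N, δ ≤ ‖(n:ℂ) + z₀‖ :=
    fun n hn => Finset.inf'_le _ hn
  set ε : ℝ := min 1 (δ/2) with hεdef
  have hε0 : 0 < ε := lt_min one_pos (by positivity)
  have hε1 : ε ≤ 1 := min_le_left _ _
  have hεδ : ε ≤ δ/2 := min_le_right _ _
  set c : ℝ := min 2⁻¹ (δ/(2*N)) with hcdef
  have hc0 : 0 < c := lt_min (by norm_num) (by positivity)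
  have hc1 : c ≤ 1 := le_trans (min_le_left _ _) (by norm_num)
  -- key lower bound on the ball
  have claim : ∀ n : ℕ, 1 ≤ n → ∀ w ∈ Metric.ball z₀ ε, c * n ≤ ‖(n:ℂ) + w‖ := by
    intro n hn w hw
    have hwz : ‖w - z₀‖ < ε := mem_ball_iff_norm.mp hw
    by_cases hnN : n ≤ N
    · have hb : δ ≤ ‖(n:ℂ) + z₀‖ := hδle n (Finset.mem_Icc.mpr ⟨hn, hnN⟩)
      have hlow : ‖(n:ℂ) + z₀‖ - ‖z₀ - w‖ ≤ ‖(n:ℂ) + w‖ := by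
        have h := norm_sub_norm_le ((n:ℂ) + z₀) (z₀ - w)
        have : (n:ℂ) + z₀ - (z₀ - w) = (n:ℂ) + w := by ring
        rwa [this] at h
      have hzw : ‖z₀ - w‖ = ‖w - z₀‖ := by rw [norm_sub_rev]
      have h2' : δ/2 ≤ ‖(n:ℂ) + w‖ := by
        rw [hzw] at hlow; linarith
      have hcn : c * n ≤ δ/2 := by
        have hcle : c ≤ δ/(2*N) := min_le_right _ _
        have hnle : (n:ℝ) ≤ (N:ℝ) := by exact_mod_cast hnN
        have hn0 : (0:ℝ) ≤ (n:ℝ) := Nat.cast_nonneg _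
        have hN0 : (0:ℝ) < (N:ℝ) := by exact_mod_cast hN1
        calc c * n ≤ (δ/(2*N)) * N :=
          mul_le_mul hcle hnle hn0 (by positivity)
        _ = δ/2 := by field_simp
      linarith
    · push_neg at hnN
      have hnR : 2*R ≤ (n:ℝ) := le_trans hNR (by exact_mod_cast hnN.le)
      have hwnorm : ‖w‖ ≤ R := by
        have : ‖w‖ ≤ ‖z₀‖ + ‖w - z₀‖ := by
          have h := norm_add_le z₀ (w - z₀)
          have h2 : z₀ + (w - z₀) = w := by ring
          rwa [h2] at h
        linarith
      have hlow : (n:ℝ) - ‖w‖ ≤ ‖(n:ℂ) + w‖ := by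
        have h := norm_sub_norm_le ((n:ℂ)) (-w)
        have h2 : (n:ℂ) - -w = (n:ℂ) + w := by ring
        rw [h2, norm_neg, Complex.norm_natCast] at h
        exact h
      have hcn : c * n ≤ (n:ℝ)/2 := by
        have hcle : c ≤ 2⁻¹ := min_le_left _ _
        have hn0 : (0:ℝ) ≤ (n:ℝ) := Nat.cast_nonneg _
        calc c * n ≤ 2⁻¹ * n := mul_le_mul_of_nonneg_right hcle hn0
        _ = (n:ℝ)/2 := by ring
      have : (n:ℝ)/2 ≤ (n:ℝ) - R := by linarith
      linarith
  -- nonvanishing on the ball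
  have hne : ∀ n : ℕ, 1 ≤ n → ∀ w ∈ Metric.ball z₀ ε, ((n:ℂ) + w) ≠ 0 := by
    intro n hn w hw
    have := claim n hn w hw
    have hpos : (0:ℝ) < c * n := by
      have : (1:ℝ) ≤ (n:ℝ) := by exact_mod_cast hn
      nlinarith
    intro h
    rw [h, norm_zero] at this
    linarith
  -- the bounding function
  set p : ℝ := 1 + 1/(r:ℝ) with hp
  have hrne : ((r:ℝ)) ≠ 0 := Nat.cast_ne_zero.mpr hr0.ne'
  have hp1 : 1 < p := by
    rw [hp]
    have : (0:ℝ) < 1/(r:ℝ) := by positivity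
    linarith
  set S : ℕ := ∑ i, e i with hS
  have hfp : Summable (fun n : ℕ => 1/((n:ℝ)) ^ p) := by
    rw [Real.summable_one_div_nat_rpow]
    exact hp1
  have hfp0 : ∀ n : ℕ, 0 ≤ 1/((n:ℝ)) ^ p := fun n => by positivity
  have hg : Summable (fun m : Fin r → ℕ => ∏ i, 1/((m i : ℝ)) ^ p) :=
    He_summable_pi_prod hfp hfp0 r
  have hgsub : Summable ((fun m : Fin r → ℕ => ∏ i, 1/((m i : ℝ)) ^ p) ∘
      (Subtype.val : {n : Fin r → ℕ // StrictAnti n ∧ ∀ i, 0 < n i} → (Fin r → ℕ))) :=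
    hg.subtype {n : Fin r → ℕ | StrictAnti n ∧ ∀ i, 0 < n i}
  have hu : Summable (fun n : {n : Fin r → ℕ // StrictAnti n ∧ ∀ i, 0 < n i} =>
      (c ^ S)⁻¹ * ∏ i, 1/((n.1 i : ℝ)) ^ p) := hgsub.mul_left _
  -- differentiability of each term
  have hF : ∀ n : {n : Fin r → ℕ // StrictAnti n ∧ ∀ i, 0 < n i},
      DifferentiableOn ℂ (fun w => ∏ i, 1 / (((n.1 i : ℂ) + w) ^ e i)) (Metric.ball z₀ ε) := by
    intro n
    apply DifferentiableOn.fun_finsetProd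
    intro i _
    apply DifferentiableOn.div (differentiableOn_const 1)
    · exact ((differentiable_const ((n.1 i : ℂ))).add differentiable_id).differentiableOn.pow _
    · intro w hw
      exact pow_ne_zero _ (hne (n.1 i) (n.2.2 i) w hw)
  -- the norm bound
  have hF_le : ∀ (n : {n : Fin r → ℕ // StrictAnti n ∧ ∀ i, 0 < n i}) (w : ℂ),
      w ∈ Metric.ball z₀ ε →
      ‖∏ i, 1 / (((n.1 i : ℂ) + w) ^ e i)‖ ≤ (c ^ S)⁻¹ * ∏ i, 1/((n.1 i : ℝ)) ^ p := by
    intro n w hw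
    have hn1 : ∀ i, (1:ℝ) ≤ (n.1 i : ℝ) := fun i => by exact_mod_cast n.2.2 i
    have hnorm : ‖∏ i, 1 / (((n.1 i : ℂ) + w) ^ e i)‖
        = ∏ i, 1 / ‖(n.1 i : ℂ) + w‖ ^ e i := by
      rw [norm_prod]
      congr 1
      funext i
      rw [norm_div, norm_one, norm_pow]
    rw [hnorm]
    have step1 : ∏ i, 1 / ‖(n.1 i : ℂ) + w‖ ^ e i
        ≤ ∏ i, 1 / (c * (n.1 i : ℝ)) ^ e i := by
      apply Finset.prod_le_prod
      · intro i _; positivity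
      · intro i _
        have hnpos : (0:ℝ) < (n.1 i : ℝ) := by exact_mod_cast n.2.2 i
        apply one_div_le_one_div_of_le
        · exact pow_pos (mul_pos hc0 hnpos) _
        · exact pow_le_pow_left₀ (by positivity) (claim (n.1 i) (n.2.2 i) w hw) _
    have hprodc : ∏ i, (c * (n.1 i : ℝ)) ^ e i = c ^ S * ∏ i, ((n.1 i : ℝ)) ^ e i := by
      simp_rw [mul_pow]
      rw [Finset.prod_mul_distrib, Finset.prod_pow_eq_pow_sum]
    have step2 : ∏ i, 1 / (c * (n.1 i : ℝ)) ^ e i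
        = (c ^ S)⁻¹ * (1 / ∏ i, ((n.1 i : ℝ)) ^ e i) := by
      rw [Finset.prod_div_distrib, Finset.prod_const_one, hprodc, one_div, mul_inv, one_div]
    have hkey := He_key_ineq hr0 e he1 he0 n.1 n.2.1 n.2.2
    have hprodpos : (0:ℝ) < ∏ i, ((n.1 i : ℝ)) ^ e i := by
      apply Finset.prod_pos; intro i _
      exact pow_pos (by exact_mod_cast n.2.2 i) _
    have hPpos : (0:ℝ) < ∏ i, ((n.1 i : ℝ)) := by
      apply Finset.prod_pos; intro i _
      exact lt_of_lt_of_le one_pos (hn1 i)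
    have step3 : 1 / ∏ i, ((n.1 i : ℝ)) ^ e i ≤ ∏ i, 1/((n.1 i : ℝ)) ^ p := by
      have hprp : ∏ i, ((n.1 i : ℝ)) ^ p = (∏ i, ((n.1 i : ℝ))) ^ p :=
        Real.finset_prod_rpow _ _ (fun i _ => by positivity) _
      have h3 : (∏ i, ((n.1 i : ℝ))) ^ p ≤ ∏ i, ((n.1 i : ℝ)) ^ e i := hkey
      have hPp : (0:ℝ) < (∏ i, ((n.1 i : ℝ))) ^ p := Real.rpow_pos_of_pos hPpos _
      calc 1 / ∏ i, ((n.1 i : ℝ)) ^ e i ≤ 1 / (∏ i, ((n.1 i : ℝ))) ^ p :=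
        one_div_le_one_div_of_le hPp h3
      _ = ∏ i, 1/((n.1 i : ℝ)) ^ p := by
        rw [← hprp, Finset.prod_div_distrib]
        simp
    calc ∏ i, 1 / ‖(n.1 i : ℂ) + w‖ ^ e i
        ≤ ∏ i, 1 / (c * (n.1 i : ℝ)) ^ e i := step1
    _ = (c ^ S)⁻¹ * (1 / ∏ i, ((n.1 i : ℝ)) ^ e i) := step2
    _ ≤ (c ^ S)⁻¹ * ∏ i, 1/((n.1 i : ℝ)) ^ p :=
        mul_le_mul_of_nonneg_left step3 (by positivity)
  -- conclude
  have hdiff : DifferentiableOn ℂ (fun w : ℂ =>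
      ∑' n : {n : Fin r → ℕ // StrictAnti n ∧ ∀ i, 0 < n i},
        ∏ i, 1 / (((n.1 i : ℂ) + w) ^ e i)) (Metric.ball z₀ ε) :=
    Complex.differentiableOn_tsum_of_summable_norm hu hF Metric.isOpen_ball hF_le
  have hHe : (fun z : ℂ => He s z) = fun w : ℂ =>
      ∑' n : {n : Fin r → ℕ // StrictAnti n ∧ ∀ i, 0 < n i},
        ∏ i, 1 / (((n.1 i : ℂ) + w) ^ e i) := rfl
  rw [hHe]
  exact (hdiff.differentiableAt
    (Metric.isOpen_ball.mem_nhds (Metric.mem_ball_self hε0))).differentiableWithinAt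
end

section
/- (Fundamental difference equation.) Let r ≥ 1 and let (s_1, …, s_r) be positive integers with s_1 ≥ 2. For every z ∈ ℂ with z ≠ 0 and z ∉ {0, -1, -2, …} (so that both z and z − 1 avoid the poles), one has He^{s_1,…,s_r}(z − 1) − He^{s_1,…,s_r}(z) = z^{-s_r} · He^{s_1,…,s_{r−1}}(z), where for r = 1 the right-hand factor is He^∅ = 1. Equivalently, Δ_-(He^{s_1,…,s_r})(z) = z^{-s_r} He^{s_1,…,s_{r−1}}(z) with Δ_-(f)(z) = f(z−1) − f(z). -/
open Finset


noncomputable def G (r : ℕ) (σ : Fin r → ℕ) (w : ℂ) : ℂ :=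
  ∑' n : {n : Fin r → ℕ // StrictAnti n ∧ ∀ i, 0 < n i},
    ∏ i, 1 / (((n.1 i : ℂ) + w) ^ σ i)

lemma G_congr {r₁ r₂ : ℕ} (h : r₁ = r₂) (σ : Fin r₁ → ℕ) (w : ℂ) :
    G r₁ σ w = G r₂ (σ ∘ Fin.cast h.symm) w := by subst h; rfl

lemma exists_norm_lower (w : ℂ) (hw : ∀ k : ℕ, 1 ≤ k → (k : ℂ) + w ≠ 0) :
    ∃ c : ℝ, 0 < c ∧ c ≤ 1 ∧ ∀ n : ℕ, 1 ≤ n → c * n ≤ ‖(n : ℂ) + w‖ := by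
  set N : ℕ := ⌈2 * ‖w‖⌉₊ + 1 with hN
  have hne : (Finset.Icc 1 N).Nonempty := ⟨1, by simp [hN]⟩
  set c₁ : ℝ := (Finset.Icc 1 N).inf' hne (fun n => ‖(n : ℂ) + w‖ / n) with hc₁def
  have hc₁ : 0 < c₁ := by
    rw [hc₁def, Finset.lt_inf'_iff]
    intro b hb
    have hb1 : 1 ≤ b := (Finset.mem_Icc.1 hb).1
    have : (0:ℝ) < b := by exact_mod_cast hb1
    exact div_pos (norm_pos_iff.2 (hw b hb1)) this
  refine ⟨min c₁ 2⁻¹, lt_min hc₁ (by norm_num), min_le_of_right_le (by norm_num), ?_⟩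
  intro n hn
  have hn0 : (0:ℝ) < n := by exact_mod_cast hn
  rcases le_or_gt n N with h | h
  · calc min c₁ 2⁻¹ * n ≤ c₁ * n := by gcongr; exact min_le_left _ _
      _ ≤ (‖(n : ℂ) + w‖ / n) * n := by
          gcongr
          exact Finset.inf'_le _ (Finset.mem_Icc.2 ⟨hn, h⟩)
      _ = ‖(n : ℂ) + w‖ := div_mul_cancel₀ _ (ne_of_gt hn0)
  · have h2 : 2 * ‖w‖ ≤ n := by
      have := Nat.le_ceil (2 * ‖w‖)
      have : (N:ℝ) ≤ n := by exact_mod_cast h.le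
      have hNc : 2 * ‖w‖ ≤ (N:ℝ) := by
        have := Nat.le_ceil (2 * ‖w‖)
        have : ((⌈2 * ‖w‖⌉₊ : ℕ):ℝ) ≤ N := by exact_mod_cast Nat.le_succ _
        linarith [Nat.le_ceil (2 * ‖w‖)]
      linarith
    have h3 : (n:ℝ) - ‖w‖ ≤ ‖(n : ℂ) + w‖ := by
      have h4 : ‖(n:ℂ)‖ ≤ ‖(n : ℂ) + w‖ + ‖w‖ := by
        calc ‖(n:ℂ)‖ = ‖((n:ℂ) + w) + (-w)‖ := by ring_nf
          _ ≤ ‖(n : ℂ) + w‖ + ‖-w‖ := norm_add_le _ _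
          _ = ‖(n : ℂ) + w‖ + ‖w‖ := by rw [norm_neg]
      have h5 : ‖(n:ℂ)‖ = (n:ℝ) := by
        simp [Complex.norm_natCast]
      linarith
    calc min c₁ 2⁻¹ * n ≤ 2⁻¹ * n := by gcongr; exact min_le_right _ _
      _ ≤ (n:ℝ) - ‖w‖ := by nlinarith [norm_nonneg w]
      _ ≤ ‖(n : ℂ) + w‖ := h3


lemma summable_pi_rpow (r : ℕ) (p : ℝ) (hp : 1 < p) :
    Summable (fun n : Fin r → ℕ => ∏ i, (((n i : ℝ)) ^ p)⁻¹) := by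
  induction r with
  | zero =>
      haveI : Subsingleton (Fin 0 → ℕ) := ⟨fun a b => funext fun i => i.elim0⟩
      haveI := Finite.of_subsingleton (α := Fin 0 → ℕ)
      exact Summable.of_finite
  | succ k ih =>
      have base : Summable (fun n : ℕ => ((n : ℝ) ^ p)⁻¹) :=
        Real.summable_nat_rpow_inv.2 hp
      have hm := base.mul_of_nonneg ih (fun n => by positivity)
        (fun n => Finset.prod_nonneg fun i _ => by positivity)
      have := (Fin.consEquiv (fun _ : Fin (k + 1) => ℕ)).symm.summable_iff.2 hm
      refine this.congr fun n => ?_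
      
      rw [Fin.prod_univ_succ]
      rfl

lemma summable_G (r : ℕ) (σ : Fin r → ℕ) (h1 : ∀ i, 1 ≤ σ i)
    (h2 : ∀ h : 0 < r, 2 ≤ σ ⟨0, h⟩) (w : ℂ)
    (hw : ∀ k : ℕ, 1 ≤ k → (k : ℂ) + w ≠ 0) :
    Summable (fun n : {n : Fin r → ℕ // StrictAnti n ∧ ∀ i, 0 < n i} =>
      ∏ i, 1 / (((n.1 i : ℂ) + w) ^ σ i)) := by
  rcases Nat.eq_zero_or_pos r with hr | hr
  · subst hr
    haveI : Subsingleton {n : Fin 0 → ℕ // StrictAnti n ∧ ∀ i, 0 < n i} :=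
      ⟨fun a b => Subtype.ext (funext fun i => i.elim0)⟩
    haveI := Finite.of_subsingleton (α := {n : Fin 0 → ℕ // StrictAnti n ∧ ∀ i, 0 < n i})
    exact Summable.of_finite
  obtain ⟨c, hc0, hc1, hc⟩ := exists_norm_lower w hw
  set p : ℝ := 1 + 1 / r with hpdef
  have hp1 : 1 < p := by
    have : (0:ℝ) < 1 / r := by positivity
    simp only [hpdef]; linarith
  set K : ℝ := (c ^ (∑ i, σ i))⁻¹ with hK
  have hdom : Summable (fun n : {n : Fin r → ℕ // StrictAnti n ∧ ∀ i, 0 < n i} =>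
      K * ∏ i, (((n.1 i : ℝ)) ^ p)⁻¹) := by
    apply Summable.mul_left
    exact (summable_pi_rpow r p hp1).comp_injective Subtype.val_injective
  apply Summable.of_norm
  apply Summable.of_nonneg_of_le (fun n => norm_nonneg _) _ hdom
  intro n
  obtain ⟨hanti, hpos⟩ := n.2
  set N : Fin r → ℝ := fun i => (n.1 i : ℝ) with hNdef
  have hN1 : ∀ i, 1 ≤ N i := fun i => by
    have := hpos i; simp only [hNdef]; exact_mod_cast this
  have hNpos : ∀ i, 0 < N i := fun i => lt_of_lt_of_le one_pos (hN1 i)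
  have hprodpos : 0 < ∏ i, N i := Finset.prod_pos fun i _ => hNpos i
  have hnorm : ‖∏ i, 1 / (((n.1 i : ℂ) + w) ^ σ i)‖
      = ∏ i, (‖(n.1 i : ℂ) + w‖ ^ σ i)⁻¹ := by
    rw [norm_prod]
    exact Finset.prod_congr rfl fun i _ => by rw [one_div, norm_inv, norm_pow]
  rw [hnorm]
  have hcn : ∀ i, 0 < c * N i := fun i => mul_pos hc0 (hNpos i)
  have step1 : ∏ i, (‖(n.1 i : ℂ) + w‖ ^ σ i)⁻¹ ≤ ∏ i, ((c * N i) ^ σ i)⁻¹ := by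
    apply Finset.prod_le_prod
    · intro i _; positivity
    · intro i _
      apply inv_anti₀ (pow_pos (hcn i) _)
      apply pow_le_pow_left₀ (le_of_lt (hcn i))
      exact hc _ (hpos i)
  have step2 : ∏ i, ((c * N i) ^ σ i)⁻¹ = K * (∏ i, N i ^ σ i)⁻¹ := by
    rw [Finset.prod_inv_distrib]
    have : ∏ i, (c * N i) ^ σ i = c ^ (∑ i, σ i) * ∏ i, N i ^ σ i := by
      rw [← Finset.prod_pow_eq_pow_sum, ← Finset.prod_mul_distrib]
      exact Finset.prod_congr rfl fun i _ => (mul_pow _ _ _)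
    rw [this, mul_inv, hK]
  -- Claim A
  set i0 : Fin r := ⟨0, hr⟩ with hi0
  have hmax : ∀ i, N i ≤ N i0 := by
    intro i
    have h : n.1 i ≤ n.1 i0 := hanti.antitone (show i0 ≤ i by
      simp only [Fin.le_def]; exact Nat.zero_le _)
    simp only [hNdef]
    exact_mod_cast h
  have claimA : (∏ i, N i) ^ p ≤ ∏ i, N i ^ σ i := by
    have a1 : N i0 * ∏ i, N i ≤ ∏ i, N i ^ σ i := by
      rw [← Finset.mul_prod_erase univ N (mem_univ i0),
          ← Finset.mul_prod_erase univ (fun i => N i ^ σ i) (mem_univ i0)]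
      have e1 : N i0 * (N i0 * ∏ i ∈ univ.erase i0, N i)
          = N i0 ^ 2 * ∏ i ∈ univ.erase i0, N i := by ring
      rw [e1]
      apply mul_le_mul
      · exact pow_le_pow_right₀ (hN1 i0) (h2 hr)
      · apply Finset.prod_le_prod (fun i _ => le_of_lt (hNpos i))
        intro i _
        exact le_self_pow₀ (hN1 i) (by have := h1 i; omega)
      · exact Finset.prod_nonneg fun i _ => le_of_lt (hNpos i)
      · positivity
    have a2 : (∏ i, N i) ^ (1/(r:ℝ)) ≤ N i0 := by
      have hprodle : ∏ i, N i ≤ N i0 ^ r := by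
        calc ∏ i, N i ≤ ∏ _i : Fin r, N i0 :=
              Finset.prod_le_prod (fun i _ => le_of_lt (hNpos i)) (fun i _ => hmax i)
          _ = N i0 ^ r := by rw [Finset.prod_const, Finset.card_univ, Fintype.card_fin]
      have hr0 : (r:ℝ) ≠ 0 := by positivity
      calc (∏ i, N i) ^ (1/(r:ℝ)) ≤ (N i0 ^ r) ^ (1/(r:ℝ)) :=
            Real.rpow_le_rpow (le_of_lt hprodpos) hprodle (by positivity)
        _ = N i0 := by
            rw [← Real.rpow_natCast (N i0) r, ← Real.rpow_mul (le_of_lt (hNpos i0)),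
              mul_one_div_cancel hr0, Real.rpow_one]
    calc (∏ i, N i) ^ p = (∏ i, N i) ^ (1/(r:ℝ)) * (∏ i, N i) ^ (1:ℝ) := by
          rw [← Real.rpow_add hprodpos]; congr 1; simp [hpdef]; ring
      _ ≤ N i0 * ∏ i, N i := by
          rw [Real.rpow_one]
          exact mul_le_mul_of_nonneg_right a2 (le_of_lt hprodpos)
      _ ≤ ∏ i, N i ^ σ i := a1
  have step3 : (∏ i, N i ^ σ i)⁻¹ ≤ ∏ i, (N i ^ p)⁻¹ := by
    rw [Finset.prod_inv_distrib, Real.finset_prod_rpow univ N (fun i _ => le_of_lt (hNpos i)) p]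
    exact inv_anti₀ (by positivity) claimA
  calc ∏ i, (‖(n.1 i : ℂ) + w‖ ^ σ i)⁻¹ ≤ ∏ i, ((c * N i) ^ σ i)⁻¹ := step1
    _ = K * (∏ i, N i ^ σ i)⁻¹ := step2
    _ ≤ K * ∏ i, (N i ^ p)⁻¹ := by
        apply mul_le_mul_of_nonneg_left step3
        rw [hK]; positivity

lemma key (r' : ℕ) (σ : Fin (r' + 1) → ℕ) (h1 : ∀ i, 1 ≤ σ i) (h2 : 2 ≤ σ 0)
    (z : ℂ) (hz : ∀ k : ℕ, z ≠ -(k : ℂ)) :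
    G (r' + 1) σ (z - 1) - G (r' + 1) σ z
      = 1 / z ^ (σ (Fin.last r')) * G r' (fun i => σ i.castSucc) z := by
  classical
  -- the equivalence "add one to every entry"
  let E : {m : Fin (r' + 1) → ℕ // StrictAnti m} ≃
      {n : Fin (r' + 1) → ℕ // StrictAnti n ∧ ∀ i, 0 < n i} :=
  { toFun := fun m => ⟨fun i => m.1 i + 1,
      fun i j hij => by have := m.2 hij; show m.1 j + 1 < m.1 i + 1; omega,
      fun i => Nat.succ_pos _⟩
    invFun := fun n => ⟨fun i => n.1 i - 1, fun i j hij => by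
      have ha := n.2.1 hij; have hb := n.2.2 j; have hcc := n.2.2 i
      show n.1 j - 1 < n.1 i - 1; omega⟩
    left_inv := fun m => Subtype.ext (funext fun i => by show m.1 i + 1 - 1 = m.1 i; omega)
    right_inv := fun n => Subtype.ext (funext fun i => by
      have := n.2.2 i; show n.1 i - 1 + 1 = n.1 i; omega) }
  have E_apply : ∀ m i, ((E m).1 i : ℕ) = m.1 i + 1 := fun m i => rfl
  set F : {m : Fin (r' + 1) → ℕ // StrictAnti m} → ℂ :=
    fun m => ∏ i, 1 / (((m.1 i : ℂ) + z) ^ σ i) with hF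
  have hpoint : ∀ m, (fun n : {n : Fin (r' + 1) → ℕ // StrictAnti n ∧ ∀ i, 0 < n i} =>
      ∏ i, 1 / (((n.1 i : ℂ) + (z - 1)) ^ σ i)) (E m) = F m := by
    intro m
    apply Finset.prod_congr rfl
    intro i _
    congr 1
    rw [E_apply]
    push_cast
    ring
  have hstep1 : G (r' + 1) σ (z - 1) = ∑' m, F m := by
    rw [G, ← Equiv.tsum_eq E (fun n => ∏ i, 1 / (((n.1 i : ℂ) + (z - 1)) ^ σ i))]
    exact tsum_congr hpoint
  -- summability of F
  have hw1 : ∀ k : ℕ, 1 ≤ k → (k : ℂ) + (z - 1) ≠ 0 := by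
    intro k hk hcon
    exact hz (k - 1) (by rw [Nat.cast_sub hk]; push_cast; linear_combination hcon)
  have hw2 : ∀ k : ℕ, 1 ≤ k → (k : ℂ) + z ≠ 0 := by
    intro k hk hcon
    exact hz k (by linear_combination hcon)
  have Fsum : Summable F := by
    have hs := summable_G (r' + 1) σ h1 (fun _ => h2) (z - 1) hw1
    exact (E.summable_iff.2 hs).congr hpoint
  -- split according to last entry
  set S : Set {m : Fin (r' + 1) → ℕ // StrictAnti m} := {m | 0 < m.1 (Fin.last r')} with hS
  have hsplit := Fsum.tsum_subtype_add_tsum_subtype_compl S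
  -- S part equals G σ z
  let E2 : ↥S ≃ {n : Fin (r' + 1) → ℕ // StrictAnti n ∧ ∀ i, 0 < n i} :=
  { toFun := fun m => ⟨m.1.1, m.1.2,
      fun i => lt_of_lt_of_le m.2 (m.1.2.antitone (Fin.le_last i))⟩
    invFun := fun n => ⟨⟨n.1, n.2.1⟩, n.2.2 _⟩
    left_inv := fun m => rfl
    right_inv := fun n => rfl }
  have hSpart : ∑' x : ↥S, F x = G (r' + 1) σ z := by
    rw [G, ← Equiv.tsum_eq E2 (fun n => ∏ i, 1 / (((n.1 i : ℂ) + z) ^ σ i))]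
    rfl
  -- Sᶜ part
  let E3 : ↥Sᶜ ≃ {n : Fin r' → ℕ // StrictAnti n ∧ ∀ i, 0 < n i} :=
  { toFun := fun m => ⟨fun i => m.1.1 i.castSucc,
      fun i j hij => m.1.2 (Fin.castSucc_lt_castSucc_iff.2 hij),
      fun i => by
        have hlast : m.1.1 (Fin.last r') = 0 := Nat.eq_zero_of_not_pos m.2
        have h := m.1.2 (Fin.castSucc_lt_last i)
        show 0 < m.1.1 i.castSucc
        omega⟩
    invFun := fun n => ⟨⟨(Fin.snoc n.1 0 : Fin (r' + 1) → ℕ), by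
      intro i j hij
      rcases Fin.eq_castSucc_or_eq_last j with ⟨j', rfl⟩ | rfl
      · rcases Fin.eq_castSucc_or_eq_last i with ⟨i', rfl⟩ | rfl
        · rw [Fin.snoc_castSucc, Fin.snoc_castSucc]
          exact n.2.1 (Fin.castSucc_lt_castSucc_iff.1 hij)
        · exact absurd hij (not_lt.2 (Fin.le_last _))
      · rcases Fin.eq_castSucc_or_eq_last i with ⟨i', rfl⟩ | rfl
        · rw [Fin.snoc_castSucc, Fin.snoc_last]
          exact n.2.2 i'
        · exact absurd hij (lt_irrefl _)⟩ , by
      show ¬ 0 < (Fin.snoc n.1 0 : Fin (r' + 1) → ℕ) (Fin.last r')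
      rw [Fin.snoc_last]
      exact lt_irrefl 0⟩
    left_inv := fun m => by
      apply Subtype.ext; apply Subtype.ext
      funext i
      show (Fin.snoc (fun i => m.1.1 i.castSucc) 0 : Fin (r' + 1) → ℕ) i = m.1.1 i
      rcases Fin.eq_castSucc_or_eq_last i with ⟨i', rfl⟩ | rfl
      · rw [Fin.snoc_castSucc]
      · rw [Fin.snoc_last]
        exact (Nat.eq_zero_of_not_pos m.2).symm
    right_inv := fun n => by
      apply Subtype.ext
      funext i
      show (Fin.snoc n.1 0 : Fin (r' + 1) → ℕ) i.castSucc = n.1 i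
      rw [Fin.snoc_castSucc] }
  have hScpart : ∑' x : ↥Sᶜ, F x
      = 1 / z ^ (σ (Fin.last r')) * G r' (fun i => σ i.castSucc) z := by
    have hzero : ∀ m : ↥Sᶜ, m.1.1 (Fin.last r') = 0 := fun m => Nat.eq_zero_of_not_pos m.2
    have hpt : ∀ m : ↥Sᶜ, F m = 1 / z ^ (σ (Fin.last r')) *
        (fun n : {n : Fin r' → ℕ // StrictAnti n ∧ ∀ i, 0 < n i} =>
          ∏ i, 1 / (((n.1 i : ℂ) + z) ^ (fun i => σ i.castSucc) i)) (E3 m) := by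
      intro m
      show (∏ i, 1 / (((m.1.1 i : ℂ) + z) ^ σ i)) = _
      rw [Fin.prod_univ_castSucc (fun i => 1 / (((m.1.1 i : ℂ) + z) ^ σ i))]
      rw [hzero m]
      push_cast
      rw [zero_add, mul_comm]
      rfl
    calc ∑' x : ↥Sᶜ, F x = ∑' x : ↥Sᶜ, 1 / z ^ (σ (Fin.last r')) *
          (fun n : {n : Fin r' → ℕ // StrictAnti n ∧ ∀ i, 0 < n i} =>
            ∏ i, 1 / (((n.1 i : ℂ) + z) ^ (fun i => σ i.castSucc) i)) (E3 x) := tsum_congr hpt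
      _ = 1 / z ^ (σ (Fin.last r')) * ∑' x : ↥Sᶜ, (fun n : {n : Fin r' → ℕ // StrictAnti n ∧ ∀ i, 0 < n i} =>
            ∏ i, 1 / (((n.1 i : ℂ) + z) ^ (fun i => σ i.castSucc) i)) (E3 x) := tsum_mul_left
      _ = 1 / z ^ (σ (Fin.last r')) * G r' (fun i => σ i.castSucc) z := by
          congr 1
          exact Equiv.tsum_eq E3 (fun n => ∏ i, 1 / (((n.1 i : ℂ) + z) ^ σ i.castSucc))
  rw [hstep1, ← hsplit, hSpart, hScpart]
  ring

/-- the fundamental difference equation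
`He^{s₁,…,s_r}(z-1) - He^{s₁,…,s_r}(z) = z^{-s_r} · He^{s₁,…,s_{r-1}}(z)`,
valid for all `z` with `z ∉ {0, -1, -2, …}`. -/
theorem hurwitzMultizeta_difference_equation (s : List ℕ) (hr : s ≠ [])
    (h1 : ∀ k ∈ s, 1 ≤ k) (h2 : 2 ≤ s.head hr)
    (z : ℂ) (hz : ∀ k : ℕ, z ≠ -(k : ℂ)) :
    He s (z - 1) - He s z = (1 / z ^ s.getLast hr) * He s.dropLast z := by
  obtain ⟨r', hr'⟩ : ∃ r', s.length = r' + 1 :=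
    ⟨s.length - 1, by have := List.length_pos_iff.2 hr; omega⟩
  have hHe : ∀ w, He s w = G (r' + 1) (s.get ∘ Fin.cast hr'.symm) w := fun w =>
    G_congr hr' s.get w
  have hlen : s.dropLast.length = r' := by rw [List.length_dropLast, hr']; omega
  have hdrop : He s.dropLast z
      = G r' (fun i => (s.get ∘ Fin.cast hr'.symm) i.castSucc) z := by
    have h0 : He s.dropLast z = G s.dropLast.length s.dropLast.get z := rfl
    rw [h0, G_congr hlen]
    congr 1
    funext i
    show s.dropLast.get (Fin.cast hlen.symm i) = s.get (Fin.cast hr'.symm i.castSucc)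
    simp only [List.get_eq_getElem, List.getElem_dropLast]
    rfl
  have hlast : (s.get ∘ Fin.cast hr'.symm) (Fin.last r') = s.getLast hr := by
    have hcast : Fin.cast hr'.symm (Fin.last r') = ⟨s.length - 1, by omega⟩ := by
      apply Fin.ext
      simp [hr']
    show s.get (Fin.cast hr'.symm (Fin.last r')) = s.getLast hr
    rw [hcast, List.getLast_eq_getElem]
    simp [List.get_eq_getElem]
  have h1σ : ∀ i, 1 ≤ (s.get ∘ Fin.cast hr'.symm) i := fun i => h1 _ (List.get_mem s _)
  have h2σ : 2 ≤ (s.get ∘ Fin.cast hr'.symm) 0 := by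
    have e : (s.get ∘ Fin.cast hr'.symm) (0 : Fin (r' + 1)) = s.head hr := by
      rw [List.head_eq_getElem_zero hr]
      rfl
    rw [e]; exact h2
  have hk := key r' (s.get ∘ Fin.cast hr'.symm) h1σ h2σ z hz
  rw [hHe (z - 1), hHe z, hdrop, ← hlast]
  exact hk
end

section
/- Let F be a rational function with complex coefficients, let f : ℂ → ℂ be a 1-periodic function (f(z − 1) = f(z) for all z), and let λ_1, …, λ_n ∈ ℂ. Suppose that F(z) + Σ_{i=1}^{n} λ_i He^{i}(z) = f(z) holds for all z ∈ ℂ outside the negative integers and outside the poles of F. Then λ_1 = ⋯ = λ_n = 0, and F and f are constant functions. -/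
/-- The regularized Hurwitz zeta function `He¹(z) = ∑_{n>0} (1/(n+z) - 1/n)`. -/
noncomputable def HeOne (z : ℂ) : ℂ :=
  ∑' n : ℕ, (1 / ((n : ℂ) + 1 + z) - 1 / ((n : ℂ) + 1))

/-- `He^i` for `i ≥ 1`: the regularized series for `i = 1`, the Hurwitz zeta
function `∑_{n>0} 1/(n+z)^i` for `i ≥ 2`. -/
noncomputable def Hei (i : ℕ) (z : ℂ) : ℂ := if i = 1 then HeOne z else He [i] z


open Filter

lemma summable_of_quad (f : ℕ → ℂ) (C : ℝ)
    (h : ∀ᶠ n in atTop, ‖f n‖ ≤ C / (n:ℝ)^2) : Summable f := by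
  refine Summable.of_norm_bounded_eventually_nat (g := fun n => C / (n:ℝ)^2) ?_ h
  simpa [div_eq_mul_inv] using (Real.summable_nat_pow_inv.mpr one_lt_two).mul_left C

lemma norm_nat_add_ge (w : ℂ) : ∀ᶠ n : ℕ in atTop, (n:ℝ)/2 ≤ ‖(n:ℂ) + w‖ := by
  filter_upwards [eventually_ge_atTop (⌈2*‖w‖⌉₊)] with n hn
  have h2 : 2*‖w‖ ≤ (n:ℝ) := le_trans (Nat.le_ceil _) (by exact_mod_cast hn)
  have : ‖(n:ℂ)‖ ≤ ‖(n:ℂ) + w‖ + ‖w‖ := by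
    simpa using norm_sub_le ((n:ℂ) + w) w
  have hn' : ‖(n:ℂ)‖ = (n:ℝ) := by simp
  nlinarith [norm_nonneg w]

lemma summable_two (a b : ℂ) : Summable (fun n : ℕ => 1/(((n:ℂ)+a)*((n:ℂ)+b))) := by
  apply summable_of_quad _ 4
  filter_upwards [norm_nat_add_ge a, norm_nat_add_ge b, eventually_ge_atTop 1] with n h1 h2 h3
  have hn : (0:ℝ) < (n:ℝ)/2 := by
    have : (1:ℝ) ≤ (n:ℝ) := by exact_mod_cast h3
    linarith
  rw [norm_div, norm_one, norm_mul]
  have key : ((n:ℝ)/2) * ((n:ℝ)/2) ≤ ‖(n:ℂ)+a‖ * ‖(n:ℂ)+b‖ :=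
    mul_le_mul h1 h2 hn.le (le_trans hn.le h1)
  calc 1 / (‖(n:ℂ)+a‖ * ‖(n:ℂ)+b‖) ≤ 1 / (((n:ℝ)/2) * ((n:ℝ)/2)) :=
        one_div_le_one_div_of_le (by positivity) key
    _ = 4 / (n:ℝ)^2 := by ring

lemma summable_pow_shift (w : ℂ) (i : ℕ) (hi : 2 ≤ i) :
    Summable (fun n : ℕ => 1/(((n:ℂ)+w)^i)) := by
  apply summable_of_quad _ 4
  filter_upwards [norm_nat_add_ge w, eventually_ge_atTop 2] with n h1 h2
  have hn2 : (1:ℝ) ≤ (n:ℝ)/2 := by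
    have : (2:ℝ) ≤ (n:ℝ) := by exact_mod_cast h2
    linarith
  have hnw : (1:ℝ) ≤ ‖(n:ℂ)+w‖ := le_trans hn2 h1
  rw [norm_div, norm_one, norm_pow]
  have key : ((n:ℝ)/2)^2 ≤ ‖(n:ℂ)+w‖^i :=
    le_trans (pow_le_pow_left₀ (by linarith) h1 2) (pow_le_pow_right₀ hnw hi)
  calc 1 / ‖(n:ℂ)+w‖^i ≤ 1 / (((n:ℝ)/2)^2) :=
        one_div_le_one_div_of_le (by positivity) key
    _ = 4 / (n:ℝ)^2 := by ring

lemma tendsto_inv_nat_add (w : ℂ) :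
    Tendsto (fun N : ℕ => ((N:ℂ)+w)⁻¹) atTop (nhds 0) := by
  rw [tendsto_zero_iff_norm_tendsto_zero]
  apply squeeze_zero' (Eventually.of_forall fun n => norm_nonneg _)
    ?_ (tendsto_const_div_atTop_nhds_zero_nat 2)
  filter_upwards [norm_nat_add_ge w, eventually_ge_atTop 1] with n h1 h3
  have hn : (0:ℝ) < (n:ℝ)/2 := by
    have : (1:ℝ) ≤ (n:ℝ) := by exact_mod_cast h3
    linarith
  rw [norm_inv]
  calc ‖(n:ℂ)+w‖⁻¹ ≤ ((n:ℝ)/2)⁻¹ := inv_anti₀ hn h1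
    _ = 2 / (n:ℝ) := by ring


noncomputable def singleEquiv :
    ℕ ≃ {n : Fin 1 → ℕ // StrictAnti n ∧ ∀ j, 0 < n j} where
  toFun m := ⟨fun _ => m + 1, Subsingleton.strictAnti _, fun _ => Nat.succ_pos m⟩
  invFun n := n.1 0 - 1
  left_inv m := by simp
  right_inv n := by
    ext j
    have hj : j = 0 := Subsingleton.elim _ _
    rw [hj]
    simp [Nat.sub_add_cancel (n.2.2 0)]

lemma He_single (i : ℕ) (z : ℂ) :
    He [i] z = ∑' m : ℕ, 1/(((m:ℂ)+1+z)^i) := by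
  have h1 : He [i] z = ∑' n : {n : Fin 1 → ℕ // StrictAnti n ∧ ∀ j, 0 < n j},
      ∏ j, 1 / ((n.1 j : ℂ) + z) ^ [i].get j := rfl
  rw [h1, ← Equiv.tsum_eq singleEquiv]
  refine tsum_congr fun m => ?_
  simp only [singleEquiv, Equiv.coe_fn_mk]
  rw [Fin.prod_univ_one, show [i].get (0 : Fin 1) = i from rfl]
  push_cast
  ring_nf

lemma He_shift (i : ℕ) (hi : 2 ≤ i) (z : ℂ) :
    He [i] (z - 1) = He [i] z + 1/z^i := by
  rw [He_single, He_single]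
  have h2 : (fun m : ℕ => 1/(((m:ℂ)+1+(z-1))^i)) = fun m : ℕ => 1/(((m:ℂ)+z)^i) := by
    funext m; ring_nf
  rw [h2, (summable_pow_shift z i hi).tsum_eq_zero_add]
  have h3 : ∀ m : ℕ, 1/((((m+1:ℕ):ℂ)+z)^i) = 1/(((m:ℂ)+1+z)^i) := by
    intro m; push_cast; ring_nf
  rw [tsum_congr h3]
  push_cast
  ring

lemma HeOne_shift (z : ℂ) (hz : InOmega z) (h0 : z ≠ 0) :
    HeOne (z - 1) = HeOne z + 1/z := by
  have hne : ∀ n : ℕ, (n:ℂ) + 1 + z ≠ 0 := by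
    intro n hc
    exact hz n (by linear_combination hc)
  have hne2 : ∀ n : ℕ, (n:ℂ) + (1 + z) ≠ 0 := by
    intro n hc
    exact hne n (by linear_combination hc)
  have hne' : ∀ n : ℕ, (n:ℂ) + z ≠ 0 := by
    intro n
    cases n with
    | zero => simpa using h0
    | succ k =>
        intro hc
        apply hz k
        push_cast at hc
        linear_combination hc
  have hn1 : ∀ n : ℕ, ((n:ℂ)+1) ≠ 0 := by
    intro n
    have : ((n+1:ℕ):ℂ) ≠ 0 := Nat.cast_ne_zero.mpr (Nat.succ_ne_zero n)
    push_cast at this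
    exact this
  set a : ℕ → ℂ := fun n => 1/((n:ℂ)+1+z) - 1/((n:ℂ)+1) with ha
  set c : ℕ → ℂ := fun n => 1/((n:ℂ)+z) - 1/((n:ℂ)+1+z) with hc
  have hsa : Summable a := by
    apply ((summable_two (1+z) 1).mul_left (-z)).congr
    intro n
    simp only [ha]
    rw [mul_one_div, div_sub_div _ _ (hne n) (hn1 n),
      div_eq_div_iff (mul_ne_zero (hne2 n) (hn1 n)) (mul_ne_zero (hne n) (hn1 n))]
    ring
  have hsc : Summable c := by
    apply ((summable_two z (1+z)).mul_left 1).congr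
    intro n
    simp only [hc]
    rw [one_mul, div_sub_div _ _ (hne' n) (hne n),
      div_eq_div_iff (mul_ne_zero (hne' n) (hne2 n)) (mul_ne_zero (hne' n) (hne n))]
    ring
  have hsumc : ∑' n, c n = 1/z := by
    refine tendsto_nhds_unique hsc.hasSum.tendsto_sum_nat ?_
    have hps : ∀ N : ℕ, ∑ n ∈ Finset.range N, c n = 1/z - 1/((N:ℂ)+z) := by
      intro N
      have h := Finset.sum_range_sub' (fun n : ℕ => 1/((n:ℂ)+z)) N
      simp only [Nat.cast_zero, zero_add, Nat.cast_add, Nat.cast_one] at h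
      simp only [hc]
      exact h
    simp only [hps]
    have : Tendsto (fun N : ℕ => 1/((N:ℂ)+z)) atTop (nhds 0) := by
      simpa [one_div] using tendsto_inv_nat_add z
    simpa using (tendsto_const_nhds (x := 1/z)).sub this
  have key : HeOne (z-1) = ∑' n, (c n + a n) := by
    rw [HeOne]
    refine tsum_congr fun n => ?_
    simp only [hc, ha]
    ring_nf
  rw [key, hsc.tsum_add hsa, hsumc, HeOne]
  ring

lemma Hei_diff (i : ℕ) (hi : 1 ≤ i) (z : ℂ) (hz : InOmega z) (h0 : z ≠ 0) :
    Hei i (z - 1) = Hei i z + 1/z^i := by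
  rcases eq_or_lt_of_le hi with h1 | h2
  · rw [Hei, Hei, ← h1]
    simpa using HeOne_shift z hz h0
  · rw [Hei, Hei, if_neg (by omega), if_neg (by omega)]
    exact He_shift i h2 z


open Polynomial in
/-- if a rational function `F` plus a linear combination
`∑ λᵢ He^i` (`1 ≤ i ≤ n`) equals a 1-periodic function `f` away from the
negative integers and the poles of `F`, then all `λᵢ` vanish and both `F` and
`f` are constant. -/
theorem rational_plus_hurwitz_combination_periodic
    (F : RatFunc ℂ) (f : ℂ → ℂ) (hf : ∀ z : ℂ, f (z - 1) = f z)
    (n : ℕ) (lam : Fin n → ℂ)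
    (h : ∀ z : ℂ, InOmega z → Polynomial.eval z F.denom ≠ 0 →
      F.eval (RingHom.id ℂ) z + ∑ i : Fin n, lam i * Hei (i.1 + 1) z = f z) :
    (∀ i, lam i = 0) ∧ (∃ c : ℂ, F = RatFunc.C c) ∧ (∃ c : ℂ, ∀ z : ℂ, f z = c) := by
  classical
  set p : ℂ[X] := F.num with hp
  set q : ℂ[X] := F.denom with hq
  have hq0 : q ≠ 0 := F.denom_ne_zero
  have hcop : IsCoprime p q := F.isCoprime_num_denom
  set L : ℂ[X] := ∑ i : Fin n, C (lam i) * X ^ (n - 1 - i.1) with hL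
  set q1 : ℂ[X] := q.comp (X - C 1) with hq1def
  set p1 : ℂ[X] := p.comp (X - C 1) with hp1def
  set D : ℂ[X] := (p1 * q - p * q1) * X ^ n + L * (q * q1) with hD
  have hq1_0 : q1 ≠ 0 := by
    intro hc
    apply hq0
    apply Polynomial.zero_of_eval_zero
    intro w
    have h2 := congrArg (Polynomial.eval (w + 1)) hc
    simpa [hq1def, Polynomial.eval_comp] using h2
  -- Step 1: D vanishes on good points
  have evalD : ∀ z : ℂ, InOmega z → z ≠ 0 → q.eval z ≠ 0 → q.eval (z-1) ≠ 0 →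
      D.eval z = 0 := by
    intro z Hz H0 Hqz Hqz1
    have Hz1 : InOmega (z - 1) := by
      intro k
      cases k with
      | zero => intro hc; exact H0 (by linear_combination hc)
      | succ j =>
          intro hc
          apply Hz j
          push_cast at hc ⊢
          linear_combination hc
    have E1 := h z Hz Hqz
    have E2 := h (z - 1) Hz1 Hqz1
    rw [hf z] at E2
    have hdiff : ∀ i : Fin n, Hei (i.1+1) (z-1) = Hei (i.1+1) z + 1/z^(i.1+1) :=
      fun i => Hei_diff (i.1+1) (Nat.le_add_left 1 i.1) z Hz H0
    have hsum : ∑ i : Fin n, lam i * Hei (i.1+1) (z-1)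
        = ∑ i : Fin n, lam i * Hei (i.1+1) z + ∑ i : Fin n, lam i * (1/z^(i.1+1)) := by
      rw [← Finset.sum_add_distrib]
      exact Finset.sum_congr rfl (fun i _ => by rw [hdiff i]; ring)
    have E3 : F.eval (RingHom.id ℂ) (z-1) - F.eval (RingHom.id ℂ) z
        + ∑ i : Fin n, lam i * (1/z^(i.1+1)) = 0 := by
      linear_combination E2 - E1 - hsum
    have hFz : F.eval (RingHom.id ℂ) z = p.eval z / q.eval z := rfl
    have hFz1 : F.eval (RingHom.id ℂ) (z-1) = p.eval (z-1) / q.eval (z-1) := rfl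
    set S : ℂ := ∑ i : Fin n, lam i * (1/z^(i.1+1)) with hS
    set T : ℂ := ∑ i : Fin n, lam i * z^(n-1-i.1) with hT
    have hST : S * z^n = T := by
      rw [hS, hT, Finset.sum_mul]
      refine Finset.sum_congr rfl fun i _ => ?_
      have hexp : (n - 1 - i.1) + (i.1 + 1) = n := by omega
      have hzpow : z^n = z^(n-1-i.1) * z^(i.1+1) := by rw [← pow_add, hexp]
      rw [hzpow]
      field_simp
    have E4 : p.eval (z-1) * q.eval z - p.eval z * q.eval (z-1)
        + S * (q.eval z * q.eval (z-1)) = 0 := by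
      rw [hFz, hFz1] at E3
      field_simp at E3
      linear_combination E3
    have hDev : D.eval z = (p.eval (z-1) * q.eval z - p.eval z * q.eval (z-1)) * z^n
        + T * (q.eval z * q.eval (z-1)) := by
      simp [hD, hp1def, hq1def, hL, hT, Polynomial.eval_comp, Polynomial.eval_finset_sum]
    rw [hDev]
    linear_combination z^n * E4 - (q.eval z * q.eval (z-1)) * hST
  -- Step 2: D = 0
  have hDz : D = 0 := by
    apply Polynomial.eq_zero_of_infinite_isRoot
    have hfin : ({x : ℂ | q.IsRoot x} ∪ {x : ℂ | q1.IsRoot x}).Finite :=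
      (Polynomial.finite_setOf_isRoot hq0).union (Polynomial.finite_setOf_isRoot hq1_0)
    have hinj : Function.Injective (fun m : ℕ => (m:ℂ) + 1/2) := by
      intro a b hab
      have : (a:ℂ) = (b:ℂ) := by linear_combination hab
      exact_mod_cast this
    have hinf : (Set.range (fun m : ℕ => (m:ℂ) + 1/2)).Infinite :=
      Set.infinite_range_of_injective hinj
    refine Set.Infinite.mono ?_ (hinf.diff hfin)
    rintro x ⟨⟨m, rfl⟩, hx2⟩
    simp only [Set.mem_union, Set.mem_setOf_eq, not_or] at hx2
    have hre : ((m:ℂ) + 1/2).re = (m:ℝ) + 1/2 := by simp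
    have Hz : InOmega ((m:ℂ) + 1/2) := by
      intro k hc
      have := congrArg Complex.re hc
      simp at this
      have h1 : (0:ℝ) ≤ (m:ℝ) := Nat.cast_nonneg m
      have h2 : (0:ℝ) ≤ (k:ℝ) := Nat.cast_nonneg k
      linarith
    have H0 : (m:ℂ) + 1/2 ≠ 0 := by
      intro hc
      have := congrArg Complex.re hc
      simp at this
      have h1 : (0:ℝ) ≤ (m:ℝ) := Nat.cast_nonneg m
      linarith
    have hq1e : q.eval ((m:ℂ) + 1/2 - 1) ≠ 0 := by
      intro hc
      apply hx2.2
      show q1.eval _ = 0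
      rw [hq1def, Polynomial.eval_comp]
      simpa using hc
    exact evalD _ Hz H0 hx2.1 hq1e
  -- Step 3: q has no roots
  have hnoroot : ∀ α : ℂ, q.eval α ≠ 0 := by
    by_contra hcon
    push_neg at hcon
    obtain ⟨γ, hγ⟩ := hcon
    set Rs : Finset ℂ := q.roots.toFinset with hRs
    have hmem : ∀ x : ℂ, x ∈ Rs ↔ q.eval x = 0 := by
      intro x
      rw [hRs, Multiset.mem_toFinset, Polynomial.mem_roots hq0]
      exact Iff.rfl
    have hne : Rs.Nonempty := ⟨γ, (hmem γ).2 hγ⟩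
    obtain ⟨α, hαm, hαmax⟩ := Finset.exists_max_image Rs Complex.re hne
    obtain ⟨β, hβm, hβmin⟩ := Finset.exists_min_image Rs Complex.re hne
    have hqα : q.eval α = 0 := (hmem α).1 hαm
    have hqβ : q.eval β = 0 := (hmem β).1 hβm
    have hqα1 : q.eval (α+1) ≠ 0 := by
      intro hc
      have := hαmax (α+1) ((hmem _).2 hc)
      simp [Complex.add_re] at this
      linarith
    have hqβ1 : q.eval (β-1) ≠ 0 := by
      intro hc
      have := hβmin (β-1) ((hmem _).2 hc)
      simp [Complex.sub_re] at this
      linarith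
    have hpα : p.eval α ≠ 0 := by
      intro hc
      obtain ⟨u, v, huv⟩ := hcop
      have := congrArg (Polynomial.eval α) huv
      simp [hc, hqα] at this
    have hpβ : p.eval β ≠ 0 := by
      intro hc
      obtain ⟨u, v, huv⟩ := hcop
      have := congrArg (Polynomial.eval β) huv
      simp [hc, hqβ] at this
    have hDα : D.eval (α+1) = 0 := by rw [hDz]; simp
    have hDβ : D.eval β = 0 := by rw [hDz]; simp
    have hDevα : D.eval (α+1) = (p.eval α * q.eval (α+1) - p.eval (α+1) * q.eval α) * (α+1)^n
        + L.eval (α+1) * (q.eval (α+1) * q.eval α) := by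
      simp [hD, hp1def, hq1def, Polynomial.eval_comp]
    have hDevβ : D.eval β = (p.eval (β-1) * q.eval β - p.eval β * q.eval (β-1)) * β^n
        + L.eval β * (q.eval β * q.eval (β-1)) := by
      simp [hD, hp1def, hq1def, Polynomial.eval_comp]
    have hα1 : p.eval α * q.eval (α+1) * (α+1)^n = 0 := by
      rw [← hDα, hDevα, hqα]; ring
    have hβ1 : p.eval β * q.eval (β-1) * β^n = 0 := by
      have h5 := hDβ
      rw [hDevβ, hqβ] at h5
      linear_combination -h5
    have hαpow : ((α:ℂ)+1)^n = 0 := by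
      rcases mul_eq_zero.mp hα1 with h' | h'
      · exact absurd h' (mul_ne_zero hpα hqα1)
      · exact h'
    have hβpow : (β:ℂ)^n = 0 := by
      rcases mul_eq_zero.mp hβ1 with h' | h'
      · exact absurd h' (mul_ne_zero hpβ hqβ1)
      · exact h'
    obtain ⟨hα0, -⟩ := pow_eq_zero_iff'.mp hαpow
    obtain ⟨hβ0, -⟩ := pow_eq_zero_iff'.mp hβpow
    have hcontra := hβmin α hαm
    have hαv : α = -1 := by linear_combination hα0
    rw [hβ0, hαv] at hcontra
    simp at hcontra
    linarith
  -- Step 4: q = 1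
  have hqdeg : q.natDegree = 0 := by
    by_contra hdeg
    have hdne : q.degree ≠ 0 := by
      rw [Polynomial.degree_eq_natDegree hq0]
      exact_mod_cast hdeg
    obtain ⟨x, hx⟩ := IsAlgClosed.exists_root q hdne
    exact hnoroot x hx
  have hqone : q = 1 := (Polynomial.Monic.natDegree_eq_zero F.monic_denom).mp hqdeg
  have hq1one : q1 = 1 := by rw [hq1def, hqone, Polynomial.one_comp]
  have hD0 : (p1 - p) * X ^ n + L = 0 := by
    have := hDz
    rw [hD, hqone, hq1one] at this
    linear_combination this
  -- lambdas vanish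
  have hlam : ∀ i : Fin n, lam i = 0 := by
    intro i
    have h1 := congrArg (fun P : ℂ[X] => P.coeff (n - 1 - i.1)) hD0
    simp only [Polynomial.coeff_add, Polynomial.coeff_zero] at h1
    have h2 : ((p1 - p) * X ^ n).coeff (n - 1 - i.1) = 0 := by
      rw [Polynomial.coeff_mul_X_pow']
      exact if_neg (by omega)
    have h3 : L.coeff (n - 1 - i.1) = lam i := by
      rw [hL, Polynomial.finset_sum_coeff]
      rw [Finset.sum_eq_single i]
      · simp [Polynomial.coeff_C_mul, Polynomial.coeff_X_pow]
      · intro j _ hji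
        simp only [Polynomial.coeff_C_mul, Polynomial.coeff_X_pow]
        rw [if_neg, mul_zero]
        intro hc
        exact hji (Fin.ext (by omega))
      · intro hni
        exact absurd (Finset.mem_univ i) hni
    rw [h2, h3] at h1
    simpa using h1
  have hL0 : L = 0 := by
    rw [hL]
    exact Finset.sum_eq_zero fun i _ => by rw [hlam i]; simp
  have hpp : p1 = p := by
    have h4 : (p1 - p) * X ^ n = 0 := by
      have := hD0
      rw [hL0, add_zero] at this
      exact this
    rcases mul_eq_zero.mp h4 with h' | h'
    · linear_combination h'
    · exact absurd h' (pow_ne_zero n Polynomial.X_ne_zero)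
  -- p is constant
  set c : ℂ := p.eval 0 with hcdef
  have hpev : ∀ k : ℕ, p.eval ((k:ℂ)) = c := by
    intro k
    induction k with
    | zero => simp [hcdef]
    | succ m ih =>
        have h5 := congrArg (Polynomial.eval ((m:ℂ) + 1)) hpp
        rw [hp1def, Polynomial.eval_comp] at h5
        simp only [Polynomial.eval_sub, Polynomial.eval_X, Polynomial.eval_one, Polynomial.eval_C,
          add_sub_cancel_right] at h5
        push_cast
        rw [← h5]
        exact ih
  have hpc : p = Polynomial.C c := by
    have hsub : p - Polynomial.C c = 0 := by
      apply Polynomial.eq_zero_of_infinite_isRoot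
      apply Set.Infinite.mono (s := Set.range (fun k : ℕ => (k:ℂ)))
      · rintro x ⟨k, rfl⟩
        simp [Polynomial.IsRoot, hpev k]
      · exact Set.infinite_range_of_injective Nat.cast_injective
    linear_combination hsub
  have hFc : F = RatFunc.C c := by
    have h6 := RatFunc.num_div_denom F
    rw [← hq, ← hp, hqone, hpc] at h6
    rw [← h6]
    simp [RatFunc.algebraMap_C]
  -- Step 5: f is constant
  refine ⟨hlam, ⟨c, hFc⟩, c, ?_⟩
  have hfomega : ∀ z : ℂ, InOmega z → f z = c := by
    intro z Hz
    have hd : Polynomial.eval z F.denom ≠ 0 := by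
      rw [← hq, hqone]
      simp
    have h7 := h z Hz hd
    rw [← h7, hFc]
    have h8 : RatFunc.eval (RingHom.id ℂ) z (RatFunc.C c) = c := by
      rw [RatFunc.eval_C]
      rfl
    rw [h8]
    have h9 : ∑ i : Fin n, lam i * Hei (i.1 + 1) z = 0 :=
      Finset.sum_eq_zero fun i _ => by rw [hlam i, zero_mul]
    rw [h9, add_zero]
  have hf1 : ∀ z : ℂ, f z = f (z + 1) := fun z => by
    have := hf (z + 1)
    simpa using this
  have hfstep : ∀ (m : ℕ) (z : ℂ), f z = f (z + m) := by
    intro m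
    induction m with
    | zero => intro z; simp
    | succ k ih =>
        intro z
        rw [hf1 z, ih (z + 1)]
        push_cast
        ring_nf
  intro z
  by_cases Hz : InOmega z
  · exact hfomega z Hz
  · have : ∃ k : ℕ, z = -((k:ℂ) + 1) := by
      by_contra hc
      push_neg at hc
      exact Hz hc
    obtain ⟨k, hk⟩ := this
    have h10 : f z = f 1 := by
      rw [hfstep (k + 2) z]
      congr 1
      rw [hk]
      push_cast
      ring
    rw [h10]
    apply hfomega 1
    intro j hc
    have := congrArg Complex.re hc
    simp at this
    have : (0:ℝ) ≤ (j:ℝ) := Nat.cast_nonneg j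
    linarith
end
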